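/- Let M be an N×N matrix over a field and α ≠ β indices. Define the (α,β)-cofactor (1_N + M)_{α̂β̂} = (-1)^{α+β} det of the matrix obtained from 1_N + M by deleting row α and column β. Then (1_N + M)_{α̂β̂} = -Σ_{k=1}^{N-1} (1/(k-1)!) Σ_{ν_1,...,ν_{k-1}} det of the k×k matrix whose first column is (M_{βα}, M_{βν_1}, ..., M_{βν_{k-1}})^T in the sense that its (i,j) entries are: first row (M_{βα}, M_{ν_1 α}, ..., M_{ν_{k-1} α}), and row i+1 is (M_{β ν_i}, M_{ν_1 ν_i}, ..., M_{ν_{k-1} ν_i}). -/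

import Mathlib

open Finset Matrix

/-- If the rows of `A` indexed by `s` are the corresponding standard basis vectors, then
`det A` equals the principal minor on the complement of `s`. -/
lemma det_eq_principal_minor {K : Type*} [CommRing K] {N k : ℕ}
    (A : Matrix (Fin N) (Fin N) K) (s : Finset (Fin N))
    (hA : ∀ i ∈ s, A i = Pi.single i 1)
    (r : Fin k → Fin N) (hr : Function.Injective r) (hrs : ∀ j, r j ∉ s)
    (hk : k + s.card = N) :
    A.det = (A.submatrix r r).det := by
  classical
  set l := s.card
  set q : Fin l → Fin N := fun b => s.orderEmbOfFin rfl b with hq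
  have hqmem : ∀ b, q b ∈ s := fun b => Finset.orderEmbOfFin_mem s rfl b
  have hqinj : Function.Injective q := fun a b h => (s.orderEmbOfFin rfl).injective h
  have hbij : Function.Bijective (Sum.elim r q) := by
    rw [Fintype.bijective_iff_injective_and_card]
    constructor
    · intro x y h
      cases x with
      | inl a => cases y with
        | inl b => exact congrArg Sum.inl (hr h)
        | inr b => simp only [Sum.elim_inl, Sum.elim_inr] at h
                   exact absurd (h ▸ hqmem b) (hrs a)
      | inr a => cases y with
        | inl b => simp only [Sum.elim_inl, Sum.elim_inr] at h
                   exact absurd (h ▸ hqmem a) (hrs b)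
        | inr b => exact congrArg Sum.inr (hqinj h)
    · simpa using hk
  set e : (Fin k ⊕ Fin l) ≃ Fin N := Equiv.ofBijective _ hbij with he
  have key : A.submatrix e e = Matrix.fromBlocks (A.submatrix r r) (A.submatrix r q) 0 1 := by
    ext i j
    have hes : ∀ x, e x = Sum.elim r q x := fun x => rfl
    cases i with
    | inl a => cases j with
      | inl b => simp [hes, Matrix.submatrix_apply]
      | inr b => simp [hes, Matrix.submatrix_apply]
    | inr a => cases j with
      | inl b =>
        simp only [Matrix.submatrix_apply, hes, Sum.elim_inl, Sum.elim_inr,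
          Matrix.fromBlocks_apply₂₁, Matrix.zero_apply]
        rw [hA _ (hqmem a), Pi.single_apply, if_neg]
        exact fun h => hrs b (h ▸ hqmem a)
      | inr b =>
        simp only [Matrix.submatrix_apply, hes, Sum.elim_inr,
          Matrix.fromBlocks_apply₂₂, Matrix.one_apply]
        rw [hA _ (hqmem a), Pi.single_apply]
        by_cases hab : a = b
        · simp [hab]
        · rw [if_neg (fun h => hab (hqinj (h.symm : q a = q b))), if_neg hab]
  calc A.det = (A.submatrix e e).det := (Matrix.det_submatrix_equiv_self e A).symm
    _ = (A.submatrix r r).det := by rw [key, Matrix.det_fromBlocks_zero₂₁]; simp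

/-- A bordered minor does not depend on the order of the enumeration of the border set. -/
lemma det_bordered_eq {K : Type*} [CommRing K] {N m : ℕ}
    (M : Matrix (Fin N) (Fin N) K) (α β : Fin N)
    (V : Finset (Fin N)) (h : V.card = m)
    (ν : Fin m → Fin N) (hν : Function.Injective ν) (hmem : ∀ a, ν a ∈ V) :
    (M.submatrix (Fin.cons β ν) (Fin.cons α ν)).det
      = (M.submatrix (Fin.cons β ⇑(V.orderEmbOfFin h)) (Fin.cons α ⇑(V.orderEmbOfFin h))).det := by
  classical
  set e := V.orderEmbOfFin h with he
  have hb1 : Function.Bijective (fun a : Fin m => (⟨ν a, hmem a⟩ : ↥(V : Finset (Fin N)))) := by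
    rw [Fintype.bijective_iff_injective_and_card]
    exact ⟨fun a b hab => hν (congrArg Subtype.val hab), by simp [h]⟩
  have hb2 : Function.Bijective (fun a : Fin m => (⟨e a, V.orderEmbOfFin_mem h a⟩ : ↥(V : Finset (Fin N)))) := by
    rw [Fintype.bijective_iff_injective_and_card]
    exact ⟨fun a b hab => e.injective (congrArg Subtype.val hab), by simp [h]⟩
  set σ : Fin m ≃ Fin m := (Equiv.ofBijective _ hb1).trans (Equiv.ofBijective _ hb2).symm with hσ
  have hσe : ∀ a, e (σ a) = ν a := by
    intro a
    have := (Equiv.ofBijective _ hb2).apply_symm_apply ((Equiv.ofBijective _ hb1) a)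
    exact congrArg Subtype.val this
  set σ' : Equiv.Perm (Fin (m + 1)) := Equiv.Perm.decomposeFin.symm (0, σ) with hσ'
  have hσ'0 : σ' 0 = 0 := Equiv.Perm.decomposeFin_symm_apply_zero 0 σ
  have hσ's : ∀ i : Fin m, σ' i.succ = (σ i).succ := by
    intro i
    rw [hσ', Equiv.Perm.decomposeFin_symm_apply_succ, Equiv.swap_self]
    rfl
  have hr : Fin.cons β ν = (Fin.cons β ⇑e : Fin (m+1) → Fin N) ∘ σ' := by
    funext i
    refine Fin.cases ?_ (fun j => ?_) i
    · simp [hσ'0]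
    · simp [hσ's, hσe]
  have hc : Fin.cons α ν = (Fin.cons α ⇑e : Fin (m+1) → Fin N) ∘ σ' := by
    funext i
    refine Fin.cases ?_ (fun j => ?_) i
    · simp [hσ'0]
    · simp [hσ's, hσe]
  rw [hr, hc]
  have : M.submatrix ((Fin.cons β ⇑e : Fin (m+1) → Fin N) ∘ σ') ((Fin.cons α ⇑e : Fin (m+1) → Fin N) ∘ σ')
      = (M.submatrix (Fin.cons β ⇑e) (Fin.cons α ⇑e)).submatrix σ' σ' := rfl
  rw [this, Matrix.det_submatrix_equiv_self]

/-- Off-diagonal cofactor expansion (Lemma of Section 7.3). For an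
`(n+1) × (n+1)` matrix `M` over a field of characteristic zero and indices
`α ≠ β`, the `(α,β)`-cofactor of `1 + M`, i.e.
`(-1)^{α+β} det((1+M) with row α and column β deleted)`, equals
`-∑_{k=1}^{n} (1/(k-1)!) ∑_{ν₁,…,ν_{k-1}} det C`, where `C` is the `k × k`
bordered matrix with entries `C_{ij} = M_{r(j) c(i)}`, `r = (β, ν₁, …, ν_{k-1})`,
`c = (α, ν₁, …, ν_{k-1})` (below the summation index `m = k - 1`). -/
theorem stmt6 (n : ℕ) (K : Type*) [Field K] [CharZero K]
    (M : Matrix (Fin (n + 1)) (Fin (n + 1)) K)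
    (α β : Fin (n + 1)) (hab : α ≠ β) :
    (-1 : K) ^ ((α : ℕ) + (β : ℕ)) *
        ((1 + M).submatrix α.succAbove β.succAbove).det
      = -∑ m ∈ Finset.range n, (m.factorial : K)⁻¹ *
          ∑ ν : Fin m → Fin (n + 1),
            (Matrix.of fun i j : Fin (m + 1) =>
              M ((Fin.cons β ν : Fin (m+1) → Fin (n+1)) j) ((Fin.cons α ν : Fin (m+1) → Fin (n+1)) i)).det := by
  classical
  rcases Nat.eq_zero_or_pos n with hn | hn
  · exfalso; apply hab; subst hn
    have h1 := α.isLt; have h2 := β.isLt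
    exact Fin.ext (by omega)
  -- the set of allowed border indices
  set U : Finset (Fin (n+1)) := Finset.univ \ {α, β} with hUdef
  have hUmem : ∀ x : Fin (n+1), x ∈ U ↔ x ≠ α ∧ x ≠ β := by
    intro x
    simp [hUdef, not_or]
  have hUcard : U.card = n - 1 := by
    rw [hUdef, Finset.card_sdiff_of_subset (Finset.subset_univ _), Finset.card_pair hab]
    simp
  -- the bordered minor of a set
  set g : Finset (Fin (n+1)) → K := fun V =>
    (M.submatrix (Fin.cons β ⇑(V.orderEmbOfFin rfl)) (Fin.cons α ⇑(V.orderEmbOfFin rfl))).det with hgdef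
  have gcast : ∀ (m : ℕ) (V : Finset (Fin (n+1))) (h : V.card = m),
      g V = (M.submatrix (Fin.cons β ⇑(V.orderEmbOfFin h)) (Fin.cons α ⇑(V.orderEmbOfFin h))).det := by
    intro m V h; subst h; rfl
  -- Step 1 : the cofactor as a determinant
  have step1 : (-1 : K) ^ ((α:ℕ)+(β:ℕ)) * ((1 + M).submatrix α.succAbove β.succAbove).det
      = ((1 + M).updateRow α (Pi.single β 1)).det := by
    rw [Matrix.det_succ_row _ α, Finset.sum_eq_single β]
    · rw [Matrix.updateRow_self]
      have h2 : ((1+M).updateRow α (Pi.single β 1)).submatrix α.succAbove β.succAbove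
          = (1+M).submatrix α.succAbove β.succAbove := by
        ext i j
        simp [Matrix.updateRow_ne (Fin.succAbove_ne α i)]
      rw [Pi.single_eq_same, h2]
      ring
    · intro j _ hj
      rw [Matrix.updateRow_self, Pi.single_eq_of_ne hj]
      ring
    · intro h; exact absurd (Finset.mem_univ β) h
  -- the two row families
  set P : Fin (n+1) → Fin (n+1) → K := fun i => Pi.single (if i = α then β else i) 1 with hPdef
  set Q : Fin (n+1) → Fin (n+1) → K := fun i => if i = α then 0 else M i with hQdef
  have hPQ : (1 + M).updateRow α (Pi.single β 1) = P + Q := by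
    ext i j
    by_cases hi : i = α
    · subst hi
      simp [hPdef, hQdef, Matrix.updateRow_self]
    · simp only [Matrix.updateRow_ne hi, Matrix.add_apply, Pi.add_apply, hPdef, hQdef,
        if_neg hi, Matrix.one_apply, Pi.single_apply]
      by_cases h : i = j
      · subst h; simp
      · rw [if_neg h, if_neg (Ne.symm h)]
  -- Step 2 : multilinear expansion over subsets
  have step2 : ((1 + M).updateRow α (Pi.single β 1)).det
      = ∑ s : Finset (Fin (n+1)), (Matrix.of (s.piecewise P Q)).det := by
    rw [hPQ]
    exact (Matrix.detRowAlternating :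
      (Fin (n+1) → K) [⋀^Fin (n+1)]→ₗ[K] K).toMultilinearMap.map_add_univ P Q
  -- Step 3 : only subsets containing α and not β survive
  set S : Finset (Finset (Fin (n+1))) := Finset.univ.filter (fun s => α ∈ s ∧ β ∉ s) with hSdef
  have step3 : ∑ s : Finset (Fin (n+1)), (Matrix.of (s.piecewise P Q)).det
      = ∑ s ∈ S, (Matrix.of (s.piecewise P Q)).det := by
    symm
    apply Finset.sum_subset (Finset.filter_subset _ _)
    intro s _ hs
    rw [Finset.mem_filter] at hs
    push_neg at hs
    by_cases hα : α ∈ s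
    · have hβ : β ∈ s := hs (Finset.mem_univ s) hα
      apply Matrix.det_zero_of_row_eq hab
      show s.piecewise P Q α = s.piecewise P Q β
      rw [Finset.piecewise_eq_of_mem _ _ _ hα, Finset.piecewise_eq_of_mem _ _ _ hβ]
      simp [hPdef, if_neg (Ne.symm hab)]
    · apply Matrix.det_eq_zero_of_row_eq_zero α
      intro j
      show s.piecewise P Q α j = 0
      rw [Finset.piecewise_eq_of_notMem _ _ _ hα]
      simp [hQdef]
  -- Step 4 : value of each surviving term
  have step4 : ∀ s ∈ S, (Matrix.of (s.piecewise P Q)).det = - g (sᶜ.erase β) := by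
    intro s hs
    rw [hSdef, Finset.mem_filter] at hs
    obtain ⟨-, hα, hβ⟩ := hs
    set V : Finset (Fin (n+1)) := sᶜ.erase β with hVdef
    have hVs : ∀ x ∈ V, x ∉ s ∧ x ≠ β := by
      intro x hx
      rw [hVdef, Finset.mem_erase, Finset.mem_compl] at hx
      exact ⟨hx.2, hx.1⟩
    have hVα : ∀ x ∈ V, x ≠ α := fun x hx h => (hVs x hx).1 (h ▸ hα)
    set e := V.orderEmbOfFin rfl with hedef
    have hemem : ∀ i, (e i) ∈ V := fun i => V.orderEmbOfFin_mem rfl i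
    set sw : Equiv.Perm (Fin (n+1)) := Equiv.swap α β with hswdef
    set D : Matrix (Fin (n+1)) (Fin (n+1)) K := Matrix.of (s.piecewise P Q) with hDdef
    set A : Matrix (Fin (n+1)) (Fin (n+1)) K := D.submatrix id ⇑sw with hAdef
    have h1 : A.det = - D.det := by
      rw [hAdef]
      rw [Matrix.det_permute' sw D, hswdef, Equiv.Perm.sign_swap hab]
      simp
    have hswβ : sw β = α := by rw [hswdef]; exact Equiv.swap_apply_right α β
    have hswα : sw α = β := by rw [hswdef]; exact Equiv.swap_apply_left α β
    have hswV : ∀ x ∈ V, sw x = x := by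
      intro x hx
      rw [hswdef]
      exact Equiv.swap_apply_of_ne_of_ne (hVα x hx) (hVs x hx).2
    have hA : ∀ i ∈ s, A i = Pi.single i 1 := by
      intro i hi
      funext j
      show D i (sw j) = (Pi.single i (1:K) : Fin (n+1) → K) j
      show s.piecewise P Q i (sw j) = (Pi.single i (1:K) : Fin (n+1) → K) j
      rw [Finset.piecewise_eq_of_mem _ _ _ hi]
      show (Pi.single (if i = α then β else i) (1:K) : Fin (n+1) → K) (sw j)
        = (Pi.single i (1:K) : Fin (n+1) → K) j
      rw [Pi.single_apply, Pi.single_apply]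
      have hkey : (sw j = if i = α then β else i) ↔ j = i := by
        rw [Equiv.apply_eq_iff_eq_symm_apply]
        have : sw.symm (if i = α then β else i) = i := by
          by_cases hiα : i = α
          · rw [if_pos hiα, hswdef, Equiv.symm_swap, Equiv.swap_apply_right, hiα]
          · have hiβ : i ≠ β := fun h => hβ (h ▸ hi)
            rw [if_neg hiα, hswdef, Equiv.symm_swap, Equiv.swap_apply_of_ne_of_ne hiα hiβ]
        rw [this]
      rw [if_congr hkey rfl rfl]
    set r : Fin (V.card+1) → Fin (n+1) := Fin.cons β ⇑e with hrdef
    have hr0 : r 0 = β := by simp [hrdef]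
    have hrsucc : ∀ i : Fin V.card, r i.succ = e i := by
      intro i; simp [hrdef]
    have hrinj : Function.Injective r := by
      apply Fin.cons_injective_iff.mpr
      constructor
      · rintro ⟨i, hi⟩
        exact (hVs _ (hemem i)).2 hi
      · exact fun a b h => e.injective h
    have hrs : ∀ j, r j ∉ s := by
      intro j
      refine Fin.cases ?_ (fun i => ?_) j
      · rw [hr0]; exact hβ
      · rw [hrsucc]; exact (hVs _ (hemem i)).1
    have hcard : (V.card+1) + s.card = n+1 := by
      have h2 : β ∈ sᶜ := Finset.mem_compl.mpr hβ
      have h3 : V.card = sᶜ.card - 1 := by rw [hVdef, Finset.card_erase_of_mem h2]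
      have h4 : s.card ≤ n+1 := by simpa using Finset.card_le_univ s
      have h5 : sᶜ.card = (n+1) - s.card := by simp [Finset.card_compl]
      have h6 : 1 ≤ sᶜ.card := Finset.card_pos.mpr ⟨β, h2⟩
      have h7 : α ∈ s := hα
      have h8 : 1 ≤ s.card := Finset.card_pos.mpr ⟨α, hα⟩
      omega
    have hL1 := det_eq_principal_minor A s hA r hrinj hrs hcard
    have hsub : A.submatrix r r = M.submatrix (Fin.cons β ⇑e) (Fin.cons α ⇑e) := by
      ext i j
      show D (r i) (sw (r j))
        = M ((Fin.cons β ⇑e : Fin (V.card+1) → Fin (n+1)) i)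
            ((Fin.cons α ⇑e : Fin (V.card+1) → Fin (n+1)) j)
      have hri : D (r i) = Q (r i) := by
        show s.piecewise P Q (r i) = Q (r i)
        exact Finset.piecewise_eq_of_notMem _ _ _ (hrs i)
      have hriα : r i ≠ α := fun h => (hrs i) (h ▸ hα)
      have hQr : Q (r i) = M (r i) := by rw [hQdef]; simp [if_neg hriα]
      have hswr : sw (r j) = (Fin.cons α ⇑e : Fin (V.card+1) → Fin (n+1)) j := by
        refine Fin.cases ?_ (fun i' => ?_) j
        · rw [hr0, hswβ, Fin.cons_zero]
        · rw [hrsucc, hswV _ (hemem i'), Fin.cons_succ]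
      rw [hri, hQr, hswr]
    have : (Matrix.of (s.piecewise P Q)).det = D.det := rfl
    rw [this]
    have hD : D.det = - A.det := by rw [h1, neg_neg]
    rw [hD, hL1, hsub]
  -- Step 5 : reindex the sum over subsets
  have step5 : ∑ s ∈ S, (- g (sᶜ.erase β)) = - ∑ V ∈ U.powerset, g V := by
    rw [← Finset.sum_neg_distrib]
    apply Finset.sum_nbij' (fun s => sᶜ.erase β) (fun V => (insert β V)ᶜ)
    · intro s hs
      rw [hSdef, Finset.mem_filter] at hs
      rw [Finset.mem_powerset]
      intro x hx
      rw [Finset.mem_erase, Finset.mem_compl] at hx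
      rw [hUmem]
      exact ⟨fun h => hx.2 (h ▸ hs.2.1), hx.1⟩
    · intro V hV
      rw [Finset.mem_powerset] at hV
      rw [hSdef, Finset.mem_filter]
      refine ⟨Finset.mem_univ _, ?_, ?_⟩
      · rw [Finset.mem_compl]
        intro h
        rcases Finset.mem_insert.mp h with h | h
        · exact hab h
        · exact (((hUmem α).mp (hV h)).1) rfl
      · rw [Finset.mem_compl]
        intro h
        exact h (Finset.mem_insert_self β V)
    · intro s hs
      rw [hSdef, Finset.mem_filter] at hs
      rw [Finset.insert_erase (Finset.mem_compl.mpr hs.2.2), compl_compl]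
    · intro V hV
      rw [Finset.mem_powerset] at hV
      have hβV : β ∉ V := fun h => (((hUmem β).mp (hV h)).2) rfl
      rw [compl_compl, Finset.erase_insert hβV]
    · intro s _
      rfl
  -- Step R : the right-hand side, term by term
  have stepR : ∀ m ∈ Finset.range n,
      (Nat.factorial m : K)⁻¹ * (∑ ν : Fin m → Fin (n+1),
        (Matrix.of fun i j : Fin (m+1) =>
          M ((Fin.cons β ν : Fin (m+1) → Fin (n+1)) j) ((Fin.cons α ν : Fin (m+1) → Fin (n+1)) i)).det)
      = ∑ V ∈ Finset.powersetCard m U, g V := by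
    intro m _
    have ha : ∀ ν : Fin m → Fin (n+1),
        (Matrix.of fun i j : Fin (m+1) =>
          M ((Fin.cons β ν : Fin (m+1) → Fin (n+1)) j) ((Fin.cons α ν : Fin (m+1) → Fin (n+1)) i)).det
        = (M.submatrix (Fin.cons β ν) (Fin.cons α ν)).det := by
      intro ν
      have hT : (Matrix.of fun i j : Fin (m+1) =>
          M ((Fin.cons β ν : Fin (m+1) → Fin (n+1)) j) ((Fin.cons α ν : Fin (m+1) → Fin (n+1)) i))ᵀ
          = M.submatrix (Fin.cons β ν) (Fin.cons α ν) := by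
        ext i j; rfl
      rw [← hT, Matrix.det_transpose]
    simp only [ha]
    set gd : Finset (Fin m → Fin (n+1)) := Finset.univ.filter
      (fun ν => Function.Injective ν ∧ ∀ a, ν a ∈ U) with hgd
    have hb : ∑ ν : Fin m → Fin (n+1), (M.submatrix (Fin.cons β ν) (Fin.cons α ν)).det
        = ∑ ν ∈ gd, (M.submatrix (Fin.cons β ν) (Fin.cons α ν)).det := by
      symm
      apply Finset.sum_subset (Finset.filter_subset _ _)
      intro ν _ hν
      rw [Finset.mem_filter] at hν
      push_neg at hν
      replace hν := hν (Finset.mem_univ ν)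
      by_cases hinj : Function.Injective ν
      · obtain ⟨a, haU⟩ := hν hinj
        rw [hUmem] at haU
        push_neg at haU
        by_cases haα : ν a = α
        · -- two equal columns
          rw [← Matrix.det_transpose, Matrix.transpose_submatrix]
          refine Matrix.det_zero_of_row_eq (Fin.succ_ne_zero a) ?_
          funext j
          rw [Matrix.submatrix_apply, Matrix.submatrix_apply, Fin.cons_succ, Fin.cons_zero, haα]
        · -- two equal rows
          have haβ : ν a = β := haU haα
          refine Matrix.det_zero_of_row_eq (Fin.succ_ne_zero a) ?_
          funext j
          rw [Matrix.submatrix_apply, Matrix.submatrix_apply, Fin.cons_succ, Fin.cons_zero, haβ]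
      · rw [Function.not_injective_iff] at hinj
        obtain ⟨a, b, hνab, hab'⟩ := hinj
        refine Matrix.det_zero_of_row_eq (i := a.succ) (j := b.succ)
          (fun h => hab' (Fin.succ_injective _ h)) ?_
        funext j
        rw [Matrix.submatrix_apply, Matrix.submatrix_apply, Fin.cons_succ, Fin.cons_succ, hνab]
    have hc : ∀ ν ∈ gd, (M.submatrix (Fin.cons β ν) (Fin.cons α ν)).det
        = g (Finset.image ν Finset.univ) := by
      intro ν hν
      rw [Finset.mem_filter] at hν
      obtain ⟨-, hinj, -⟩ := hν
      have hVcard : (Finset.image ν Finset.univ).card = m := by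
        rw [Finset.card_image_of_injective _ hinj, Finset.card_univ, Fintype.card_fin]
      rw [gcast m _ hVcard]
      exact det_bordered_eq M α β _ hVcard ν hinj
        (fun a => Finset.mem_image_of_mem ν (Finset.mem_univ a))
    rw [hb, Finset.sum_congr rfl hc]
    have hmaps : ∀ ν ∈ gd, Finset.image ν Finset.univ ∈ Finset.powersetCard m U := by
      intro ν hν
      rw [Finset.mem_filter] at hν
      obtain ⟨-, hinj, hmem⟩ := hν
      rw [Finset.mem_powersetCard]
      constructor
      · intro x hx
        obtain ⟨a, -, rfl⟩ := Finset.mem_image.mp hx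
        exact hmem a
      · rw [Finset.card_image_of_injective _ hinj, Finset.card_univ, Fintype.card_fin]
    rw [← Finset.sum_fiberwise_of_maps_to hmaps
      (fun ν => g (Finset.image ν Finset.univ))]
    have hinner : ∀ V ∈ Finset.powersetCard m U,
        ∑ ν ∈ gd with Finset.image ν Finset.univ = V, g (Finset.image ν Finset.univ)
        = (m.factorial : K) * g V := by
      intro V hV
      rw [Finset.mem_powersetCard] at hV
      obtain ⟨hVU, hVcard⟩ := hV
      have hfib : (gd.filter (fun ν => Finset.image ν Finset.univ = V))
          = Finset.univ.filter (fun ν : Fin m → Fin (n+1) =>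
              Function.Injective ν ∧ ∀ a, ν a ∈ V) := by
        ext ν
        rw [Finset.mem_filter, Finset.mem_filter, Finset.mem_filter]
        simp only [Finset.mem_univ, true_and]
        constructor
        · rintro ⟨⟨hinj, -⟩, him⟩
          exact ⟨hinj, fun a => him ▸ Finset.mem_image_of_mem ν (Finset.mem_univ a)⟩
        · rintro ⟨hinj, hmem⟩
          have hsub : Finset.image ν Finset.univ ⊆ V := by
            intro x hx
            obtain ⟨a, -, rfl⟩ := Finset.mem_image.mp hx
            exact hmem a
          have hle : V.card ≤ (Finset.image ν Finset.univ).card := by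
            rw [Finset.card_image_of_injective _ hinj, Finset.card_univ, Fintype.card_fin, hVcard]
          exact ⟨⟨hinj, fun a => hVU (hmem a)⟩, Finset.eq_of_subset_of_card_le hsub hle⟩
      have hcardfib : (gd.filter (fun ν => Finset.image ν Finset.univ = V)).card
          = m.factorial := by
        rw [hfib, ← Fintype.card_subtype]
        have hequiv : {ν : Fin m → Fin (n+1) // Function.Injective ν ∧ ∀ a, ν a ∈ V}
            ≃ (Fin m ↪ {x : Fin (n+1) // x ∈ V}) :=
          { toFun := fun ν => ⟨fun a => ⟨ν.1 a, ν.2.2 a⟩,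
              fun a b h => ν.2.1 (congrArg Subtype.val h)⟩
            invFun := fun f => ⟨fun a => (f a).1,
              ⟨fun a b h => f.injective (Subtype.ext h), fun a => (f a).2⟩⟩
            left_inv := fun ν => Subtype.ext (funext fun a => rfl)
            right_inv := fun f => Function.Embedding.ext fun a => rfl }
        rw [Fintype.card_congr hequiv, Fintype.card_embedding_eq]
        rw [Fintype.card_coe, Fintype.card_fin, hVcard, Nat.descFactorial_self]
      calc ∑ ν ∈ gd with Finset.image ν Finset.univ = V, g (Finset.image ν Finset.univ)
          = ∑ ν ∈ gd with Finset.image ν Finset.univ = V, g V := by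
            apply Finset.sum_congr rfl
            intro ν hν
            rw [(Finset.mem_filter.mp hν).2]
        _ = (m.factorial : K) * g V := by
            rw [Finset.sum_const, hcardfib, nsmul_eq_mul]
    rw [Finset.sum_congr rfl hinner, ← Finset.mul_sum, ← mul_assoc,
      inv_mul_cancel₀ (by exact_mod_cast Nat.factorial_ne_zero m), one_mul]
  -- Step G : powerset decomposition
  have stepG : ∑ V ∈ U.powerset, g V
      = ∑ m ∈ Finset.range n, ∑ V ∈ Finset.powersetCard m U, g V := by
    rw [Finset.powerset_card_biUnion, Finset.sum_biUnion ((Finset.pairwise_disjoint_powersetCard U).set_pairwise _)]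
    have : U.card + 1 = n := by omega
    rw [this]
  -- assemble
  rw [step1, step2, step3, Finset.sum_congr rfl step4, step5]
  rw [Finset.sum_congr rfl stepR, ← stepG]
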